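/- Let f ∈ L¹(ℝ) and (δₙ) be a delta sequence. Then H(f # δₙ) → H(f) uniformly on every compact subset of ℝ. -/

import Mathlib

open MeasureTheory Real Filter Topology

noncomputable def hash (f g : ℝ → ℝ) : ℝ → ℝ :=
  fun x => (1/2) * ∫ y, (f (x + y) + f (x - y)) * g y

noncomputable def hartley (f : ℝ → ℝ) : ℝ → ℝ :=
  fun t => (1 / Real.sqrt (2 * Real.pi)) * ∫ x, f x * (Real.cos (x * t) + Real.sin (x * t))

noncomputable def cosT (f : ℝ → ℝ) : ℝ → ℝ :=
  fun t => ∫ x, f x * Real.cos (x * t)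

noncomputable def fourierT (f : ℝ → ℝ) : ℝ → ℂ :=
  fun t => (1 / Real.sqrt (2 * Real.pi) : ℂ) * ∫ x, (f x : ℂ) * Complex.exp (-Complex.I * x * t)

lemma abs_cos_sub_one_le (a : ℝ) : |Real.cos a - 1| ≤ |a| := by
  have ha : (2:ℝ) * (a/2) = a := by ring
  have h := Real.cos_two_mul (a/2)
  rw [ha] at h
  have h2 := Real.sin_sq_add_cos_sq (a/2)
  have hs1 : |Real.sin (a/2)| ≤ 1 := Real.abs_sin_le_one _
  have hs2 : |Real.sin (a/2)| ≤ |a/2| := Real.abs_sin_le_abs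
  have habs : |a/2| = |a|/2 := by rw [abs_div]; norm_num
  have e : Real.cos a - 1 = -(2 * Real.sin (a/2)^2) := by nlinarith [h, h2]
  rw [e, abs_neg, abs_of_nonneg (by positivity : (0:ℝ) ≤ 2 * Real.sin (a/2)^2)]
  have hsq : Real.sin (a/2)^2 = |Real.sin (a/2)|^2 := (sq_abs _).symm
  rw [hsq]
  nlinarith [abs_nonneg (Real.sin (a/2)), abs_nonneg a, hs1, hs2, habs]

lemma key_identity (f g : ℝ → ℝ) (hf : Integrable f) (hg : Integrable g) (t : ℝ) :
    hartley (hash f g) t = hartley f t * ∫ y, Real.cos (y * t) * g y := by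
  set c : ℝ → ℝ := fun x => Real.cos (x * t) + Real.sin (x * t) with hcdef
  have hcont : Continuous c := by
    exact (Real.continuous_cos.comp (continuous_id.mul continuous_const)).add
      (Real.continuous_sin.comp (continuous_id.mul continuous_const))
  have hbd : ∀ x, ‖c x‖ ≤ 2 := by
    intro x
    have := Real.abs_cos_le_one (x * t)
    have := Real.abs_sin_le_one (x * t)
    simp only [hcdef, Real.norm_eq_abs]
    calc |Real.cos (x*t) + Real.sin (x*t)| ≤ |Real.cos (x*t)| + |Real.sin (x*t)| := abs_add_le _ _
      _ ≤ 2 := by linarith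
  -- bounded-mult helper
  have hmul : ∀ (φ ψ : ℝ → ℝ), Integrable φ → Continuous ψ → (∀ x, ‖ψ x‖ ≤ 2) →
      Integrable (fun x => φ x * ψ x) := by
    intro φ ψ hφ hψ hb
    exact (hφ.bdd_mul hψ.aestronglyMeasurable (Filter.Eventually.of_forall hb)).congr
      (Filter.Eventually.of_forall fun x => mul_comm _ _)
  -- product integrability
  have hsub : Integrable (fun p : ℝ × ℝ => g p.2 * f (p.1 - p.2))
      ((volume : Measure ℝ).prod volume) :=
    hg.convolution_integrand (ContinuousLinearMap.mul ℝ ℝ) hf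
  have hadd : Integrable (fun p : ℝ × ℝ => g p.2 * f (p.1 + p.2))
      ((volume : Measure ℝ).prod volume) := by
    have h1 : Integrable (fun p : ℝ × ℝ => (fun y => g (-y)) p.2 * f (p.1 - p.2))
        ((volume : Measure ℝ).prod volume) :=
      hg.comp_neg.convolution_integrand (ContinuousLinearMap.mul ℝ ℝ) hf
    set e : ℝ × ℝ ≃ᵐ ℝ × ℝ := (MeasurableEquiv.refl ℝ).prodCongr (MeasurableEquiv.neg ℝ) with he
    have hmp : MeasurePreserving (⇑e) ((volume : Measure ℝ).prod volume)
        ((volume : Measure ℝ).prod volume) :=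
      (MeasurePreserving.id _).prod (Measure.measurePreserving_neg _)
    have := (hmp.integrable_comp_emb e.measurableEmbedding).mpr h1
    refine this.congr (Filter.Eventually.of_forall fun p => ?_)
    simp [he, Function.comp, MeasurableEquiv.prodCongr, sub_neg_eq_add]
  have hcm : AEStronglyMeasurable (fun p : ℝ × ℝ => c p.1) ((volume : Measure ℝ).prod volume) :=
    (hcont.comp continuous_fst).aestronglyMeasurable
  have hF : Integrable (Function.uncurry fun x y => (f (x + y) + f (x - y)) * g y * c x)
      ((volume : Measure ℝ).prod volume) := by
    have h := (hadd.bdd_mul hcm (Filter.Eventually.of_forall fun p => hbd p.1)).add (hsub.bdd_mul hcm (Filter.Eventually.of_forall fun p => hbd p.1))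
    refine h.congr (Filter.Eventually.of_forall fun p => ?_)
    simp only [Function.uncurry, Pi.add_apply]
    ring
  -- integrability of f translated times c-type functions
  have hfc : ∀ y : ℝ, Integrable (fun x => f (x + y) * c x) :=
    fun y => hmul _ _ (hf.comp_add_right y) hcont hbd
  have hfc' : ∀ y : ℝ, Integrable (fun x => f (x - y) * c x) :=
    fun y => hmul _ _ (hf.comp_sub_right y) hcont hbd
  have hfshift : ∀ y : ℝ, Integrable (fun u => f u * c (u - y)) := by
    intro y
    refine hmul _ _ hf (hcont.comp (continuous_id.sub continuous_const)) (fun x => hbd _)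
  have hfshift' : ∀ y : ℝ, Integrable (fun u => f u * c (u + y)) := by
    intro y
    refine hmul _ _ hf (hcont.comp (continuous_id.add continuous_const)) (fun x => hbd _)
  have trig : ∀ u y : ℝ, c (u - y) + c (u + y) = 2 * Real.cos (y * t) * c u := by
    intro u y
    simp only [hcdef, sub_mul, add_mul, Real.cos_sub, Real.sin_sub, Real.cos_add, Real.sin_add]
    ring
  have inner : ∀ y : ℝ, (∫ x, (f (x + y) + f (x - y)) * g y * c x)
      = 2 * Real.cos (y * t) * ((∫ u, f u * c u) * g y) := by
    intro y
    have e1 : (∫ x, (f (x + y) + f (x - y)) * g y * c x)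
        = (∫ x, f (x + y) * c x) * g y + (∫ x, f (x - y) * c x) * g y := by
      rw [← integral_mul_const, ← integral_mul_const, ← integral_add
        ((hfc y).mul_const (g y)) ((hfc' y).mul_const (g y))]
      congr 1; funext x; ring
    have e2 : (∫ x, f (x + y) * c x) = ∫ u, f u * c (u - y) := by
      rw [← integral_add_right_eq_self (fun u => f u * c (u - y)) y]
      simp
    have e3 : (∫ x, f (x - y) * c x) = ∫ u, f u * c (u + y) := by
      rw [← integral_sub_right_eq_self (fun u => f u * c (u + y)) y]
      simp
    have e4 : (∫ u, f u * c (u - y)) + (∫ u, f u * c (u + y))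
        = 2 * Real.cos (y * t) * ∫ u, f u * c u := by
      rw [← integral_add (hfshift y) (hfshift' y), ← integral_const_mul]
      congr 1; funext u
      rw [← mul_add, trig u y]; ring
    rw [e1, e2, e3, ← add_mul, e4]; ring
  show (1 / Real.sqrt (2 * Real.pi)) * ∫ x, _root_.hash f g x * c x = _
  have step1 : (∫ x, _root_.hash f g x * c x)
      = (1/2) * ∫ x, ∫ y, (f (x + y) + f (x - y)) * g y * c x := by
    rw [← integral_const_mul]
    congr 1; funext x
    simp only [_root_.hash]
    rw [mul_assoc, integral_mul_const]
  rw [step1, integral_integral_swap hF]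
  simp_rw [inner]
  have step2 : (∫ y, 2 * Real.cos (y * t) * ((∫ u, f u * c u) * g y))
      = 2 * ((∫ u, f u * c u) * ∫ y, Real.cos (y * t) * g y) := by
    rw [← integral_const_mul, ← integral_const_mul]
    congr 1; funext y; ring
  rw [step2]
  show _ = (1 / Real.sqrt (2 * Real.pi)) * (∫ u, f u * c u) * ∫ y, Real.cos (y * t) * g y
  ring

theorem stmt17 (f : ℝ → ℝ) (hf : Integrable f)
    (δ : ℕ → ℝ → ℝ) (M : ℝ) (ε : ℕ → ℝ)
    (hint : ∀ n, Integrable (δ n))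
    (h1 : ∀ n, ∫ x, δ n x = 1)
    (hM : 0 < M) (h2 : ∀ n, (∫ x, |δ n x|) ≤ M)
    (hsupp : ∀ n, Function.support (δ n) ⊆ Set.Icc (-(ε n)) (ε n))
    (hε : Tendsto ε atTop (𝓝 0)) :
    ∀ K : Set ℝ, IsCompact K →
      TendstoUniformlyOn (fun n t => hartley (hash f (δ n)) t) (hartley f) atTop K := by
  intro K hK
  obtain ⟨T, hT⟩ := hK.isBounded.subset_closedBall 0
  set T' : ℝ := max T 0 with hT'def
  have hT'0 : 0 ≤ T' := le_max_right _ _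
  have htK : ∀ t ∈ K, |t| ≤ T' := by
    intro t ht
    have := hT ht
    simp only [Metric.mem_closedBall, Real.dist_eq, sub_zero] at this
    exact this.trans (le_max_left _ _)
  -- uniform bound on hartley f
  set C : ℝ := (1 / Real.sqrt (2 * Real.pi)) * (2 * ∫ x, |f x|) + 1 with hCdef
  have hsqrt : 0 ≤ 1 / Real.sqrt (2 * Real.pi) := by positivity
  have hintabs : 0 ≤ ∫ x, |f x| := integral_nonneg fun x => abs_nonneg _
  have hC0 : 0 ≤ C := by positivity
  have hCb : ∀ t : ℝ, |hartley f t| ≤ C := by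
    intro t
    have hb : (∫ x, |f x * (Real.cos (x * t) + Real.sin (x * t))|) ≤ 2 * ∫ x, |f x| := by
      rw [← integral_const_mul]
      refine integral_mono ?_ ?_ ?_
      · refine (Integrable.abs ?_)
        refine hf.bdd_mul ?_ (c := 2) (Filter.Eventually.of_forall fun x => ?_) |>.congr
          (Filter.Eventually.of_forall fun x => mul_comm _ _)
        · exact ((Real.continuous_cos.comp (continuous_id.mul continuous_const)).add
            (Real.continuous_sin.comp (continuous_id.mul continuous_const))).aestronglyMeasurable
        · calc ‖Real.cos (x*t) + Real.sin (x*t)‖ ≤ |Real.cos (x*t)| + |Real.sin (x*t)| :=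
            abs_add_le _ _
            _ ≤ 2 := by
              have := Real.abs_cos_le_one (x * t); have := Real.abs_sin_le_one (x * t); linarith
      · exact (hf.abs).const_mul 2
      · intro x
        dsimp only
        rw [abs_mul]
        have h1 : |Real.cos (x*t) + Real.sin (x*t)| ≤ 2 := by
          calc |Real.cos (x*t) + Real.sin (x*t)| ≤ |Real.cos (x*t)| + |Real.sin (x*t)| :=
            abs_add_le _ _
            _ ≤ 2 := by
              have := Real.abs_cos_le_one (x * t); have := Real.abs_sin_le_one (x * t); linarith
        calc |f x| * |Real.cos (x*t) + Real.sin (x*t)| ≤ |f x| * 2 :=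
          mul_le_mul_of_nonneg_left h1 (abs_nonneg _)
          _ = 2 * |f x| := by ring
    calc |hartley f t| ≤ (1 / Real.sqrt (2 * Real.pi)) *
        ∫ x, |f x * (Real.cos (x * t) + Real.sin (x * t))| := by
          rw [hartley, abs_mul, abs_of_nonneg hsqrt]
          refine mul_le_mul_of_nonneg_left ?_ hsqrt
          have := norm_integral_le_integral_norm (μ := volume)
            fun x => f x * (Real.cos (x*t) + Real.sin (x*t))
          simpa only [Real.norm_eq_abs] using this
      _ ≤ (1 / Real.sqrt (2 * Real.pi)) * (2 * ∫ x, |f x|) := by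
          exact mul_le_mul_of_nonneg_left hb hsqrt
      _ ≤ C := by simp [hCdef]
  -- pointwise estimate on the cosine integral
  have hcosint : ∀ n, ∀ t ∈ K, |(∫ y, Real.cos (y * t) * δ n y) - 1| ≤ M * (T' * |ε n|) := by
    intro n t ht
    have hδcos : Integrable (fun y => Real.cos (y * t) * δ n y) :=
      (hint n).bdd_mul
        (Real.continuous_cos.comp (continuous_id.mul continuous_const)).aestronglyMeasurable
        (c := 1) (Filter.Eventually.of_forall fun y => Real.abs_cos_le_one _)
    have e0 : (∫ y, (Real.cos (y * t) - 1) * δ n y)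
        = (∫ y, Real.cos (y * t) * δ n y) - 1 := by
      have e0' : (∫ y, (Real.cos (y * t) - 1) * δ n y)
          = (∫ y, Real.cos (y * t) * δ n y) - ∫ y, δ n y := by
        rw [← integral_sub hδcos (hint n)]
        congr 1; funext y; ring
      rw [e0', h1 n]
    rw [← e0]
    have hptw : ∀ y, |(Real.cos (y * t) - 1) * δ n y| ≤ (T' * |ε n|) * |δ n y| := by
      intro y
      by_cases hy : δ n y = 0
      · have h0 : (0:ℝ) ≤ (T' * |ε n|) * |δ n y| := by positivity
        simpa [hy] using h0
      · have hmem := hsupp n (by simpa [Function.mem_support] using hy)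
        have hyb : |y| ≤ ε n := abs_le.mpr ⟨hmem.1, hmem.2⟩
        have hyb' : |y| ≤ |ε n| := hyb.trans (le_abs_self _)
        have hlip : |Real.cos (y * t) - 1| ≤ |y * t| := abs_cos_sub_one_le _
        rw [abs_mul]
        refine mul_le_mul_of_nonneg_right (hlip.trans ?_) (abs_nonneg _)
        rw [abs_mul]
        calc |y| * |t| ≤ |ε n| * T' :=
          mul_le_mul hyb' (htK t ht) (abs_nonneg _) (abs_nonneg _)
          _ = T' * |ε n| := by ring
    have habs1 : |∫ y, (Real.cos (y * t) - 1) * δ n y|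
        ≤ ∫ y, |(Real.cos (y * t) - 1) * δ n y| := by
      have := norm_integral_le_integral_norm (μ := volume)
        fun y => (Real.cos (y*t) - 1) * δ n y
      simpa only [Real.norm_eq_abs] using this
    calc |∫ y, (Real.cos (y * t) - 1) * δ n y| ≤ ∫ y, |(Real.cos (y * t) - 1) * δ n y| := habs1
      _ ≤ ∫ y, (T' * |ε n|) * |δ n y| := by
          refine integral_mono ?_ ?_ hptw
          · exact ((hδcos.sub (hint n)).congr
              (Filter.Eventually.of_forall fun y => by simp only [Pi.sub_apply]; ring)).abs
          · exact ((hint n).abs).const_mul _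
      _ = (T' * |ε n|) * ∫ y, |δ n y| := integral_const_mul _ _
      _ ≤ (T' * |ε n|) * M := by
          refine mul_le_mul_of_nonneg_left (h2 n) ?_; positivity
      _ = M * (T' * |ε n|) := by ring
  rw [Metric.tendstoUniformlyOn_iff]
  intro r hr
  have hlim : Tendsto (fun n => C * (M * (T' * |ε n|))) atTop (𝓝 0) := by
    have := ((hε.abs.const_mul T').const_mul M).const_mul C
    simpa using this
  filter_upwards [hlim.eventually_lt_const hr] with n hn
  intro t ht
  have hkey := key_identity f (δ n) hf (hint n) t
  rw [Real.dist_eq]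
  have : hartley f t - hartley (hash f (δ n)) t
      = hartley f t * (1 - ∫ y, Real.cos (y * t) * δ n y) := by rw [hkey]; ring
  rw [this, abs_mul]
  calc |hartley f t| * |1 - ∫ y, Real.cos (y * t) * δ n y|
      ≤ C * (M * (T' * |ε n|)) := by
        refine mul_le_mul (hCb t) ?_ (abs_nonneg _) hC0
        rw [abs_sub_comm]
        exact hcosint n t ht
    _ < r := hn
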